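/- arXiv:2306.09156 — 2 statements merged into one kernel-verified Lean document; each statement's English description precedes it below -/
import Mathlib

section
/- Let m ≥ 1, r > 0, t₀ ∈ ℝ, I = [t₀ - r, t₀ + r], and let f : I → ℝ be of class C^{m+1}. Suppose that for each j = 2, …, m+1 either f^{(j)} ≥ 0 on I or f^{(j)} ≤ 0 on I. Then |f^{(m)}(t₀)| ≤ 2^{(m+2)(m+1)/2 - 2} · (sup_{t ∈ I} |f(t)|) / r^m. -/
open Set

/-- Key one-step estimate: if `g' = d` on `I`, `d' = e` on `I`, `e` has constant sign,
and `|g| ≤ K` on `[c-ρ, c+ρ] ⊆ I`, then `|d c| ≤ 2K/ρ`. Nonneg case. -/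
lemma gromov_key_pos (t₀ r : ℝ) (c ρ : ℝ) (hρ : 0 < ρ)
    (hsub : Icc (c - ρ) (c + ρ) ⊆ Icc (t₀ - r) (t₀ + r))
    (g d e : ℝ → ℝ)
    (hgd : ∀ x ∈ Icc (t₀ - r) (t₀ + r), HasDerivWithinAt g (d x) (Icc (t₀ - r) (t₀ + r)) x)
    (hdc : ContinuousOn d (Icc (t₀ - r) (t₀ + r)))
    (hde : ∀ x ∈ Icc (t₀ - r) (t₀ + r), HasDerivWithinAt d (e x) (Icc (t₀ - r) (t₀ + r)) x)
    (hsign : ∀ x ∈ Icc (t₀ - r) (t₀ + r), 0 ≤ e x)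
    (K : ℝ) (hK : ∀ x ∈ Icc (c - ρ) (c + ρ), |g x| ≤ K) :
    |d c| ≤ 2 * K / ρ := by
  set I : Set ℝ := Icc (t₀ - r) (t₀ + r) with hIdef
  have hle1 : t₀ - r ≤ c - ρ := (hsub (left_mem_Icc.2 (by linarith))).1
  have hle2 : c + ρ ≤ t₀ + r := (hsub (right_mem_Icc.2 (by linarith))).2
  have hrr : t₀ - r < t₀ + r := by linarith
  have hint : interior I = Ioo (t₀ - r) (t₀ + r) := interior_Icc
  -- interior points of subintervals are interior to I
  have hIoo : ∀ x ∈ Ioo (c - ρ) (c + ρ), x ∈ interior I := by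
    intro x hx
    rw [hint]
    exact ⟨lt_of_le_of_lt hle1 hx.1, lt_of_lt_of_le hx.2 hle2⟩
  have hDA : ∀ x ∈ Ioo (c - ρ) (c + ρ), HasDerivAt g (d x) x := by
    intro x hx
    have hxI : x ∈ I := interior_subset (hIoo x hx)
    exact (hgd x hxI).hasDerivAt (Filter.mem_of_superset (isOpen_interior.mem_nhds (hIoo x hx))
      interior_subset)
  -- d is monotone on I
  have hmono : MonotoneOn d I := by
    apply monotoneOn_of_deriv_nonneg (convex_Icc _ _) hdc
    · intro x hx
      rw [hint] at hx
      exact ((hde x (Ioo_subset_Icc_self hx)).hasDerivAt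
        (Icc_mem_nhds hx.1 hx.2)).differentiableAt.differentiableWithinAt
    · intro x hx
      rw [hint] at hx
      rw [((hde x (Ioo_subset_Icc_self hx)).hasDerivAt (Icc_mem_nhds hx.1 hx.2)).deriv]
      exact hsign x (Ioo_subset_Icc_self hx)
  have hcI : c ∈ Icc (c - ρ) (c + ρ) := ⟨by linarith, by linarith⟩
  have hgc : ContinuousOn g (Icc (c - ρ) (c + ρ)) := fun x hx =>
    ((hgd x (hsub hx)).continuousWithinAt).mono hsub
  -- upper bound
  obtain ⟨ξ, hξ, hξeq⟩ := exists_hasDerivAt_eq_slope g d (show c < c + ρ by linarith)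
    (hgc.mono (Icc_subset_Icc (by linarith) le_rfl))
    (fun x hx => hDA x ⟨by linarith [hx.1], hx.2⟩)
  have hup : d c ≤ 2 * K / ρ := by
    have h1 : d c ≤ d ξ := hmono (hsub hcI)
      (hsub ⟨by linarith [hξ.1], le_of_lt hξ.2⟩) (le_of_lt hξ.1)
    have h2 : d ξ ≤ 2 * K / ρ := by
      rw [hξeq, show c + ρ - c = ρ by ring]
      have hb1 := abs_le.1 (hK _ (right_mem_Icc.2 (by linarith)))
      have hb2 := abs_le.1 (hK c hcI)
      gcongr
      linarith
    linarith
  -- lower bound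
  obtain ⟨η, hη, hηeq⟩ := exists_hasDerivAt_eq_slope g d (show c - ρ < c by linarith)
    (hgc.mono (Icc_subset_Icc le_rfl (by linarith)))
    (fun x hx => hDA x ⟨hx.1, by linarith [hx.2]⟩)
  have hlo : -(2 * K / ρ) ≤ d c := by
    have h1 : d η ≤ d c := hmono (hsub ⟨le_of_lt hη.1, by linarith [hη.2]⟩)
      (hsub hcI) (le_of_lt hη.2)
    have h2 : -(2 * K / ρ) ≤ d η := by
      rw [hηeq, show c - (c - ρ) = ρ by ring, ← neg_div]
      have hb1 := abs_le.1 (hK _ (left_mem_Icc.2 (by linarith)))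
      have hb2 := abs_le.1 (hK c hcI)
      gcongr
      linarith
    linarith
  exact abs_le.2 ⟨hlo, hup⟩

lemma gromov_key (t₀ r : ℝ) (c ρ : ℝ) (hρ : 0 < ρ)
    (hsub : Icc (c - ρ) (c + ρ) ⊆ Icc (t₀ - r) (t₀ + r))
    (g d e : ℝ → ℝ)
    (hgd : ∀ x ∈ Icc (t₀ - r) (t₀ + r), HasDerivWithinAt g (d x) (Icc (t₀ - r) (t₀ + r)) x)
    (hdc : ContinuousOn d (Icc (t₀ - r) (t₀ + r)))
    (hde : ∀ x ∈ Icc (t₀ - r) (t₀ + r), HasDerivWithinAt d (e x) (Icc (t₀ - r) (t₀ + r)) x)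
    (hsign : (∀ x ∈ Icc (t₀ - r) (t₀ + r), 0 ≤ e x) ∨ (∀ x ∈ Icc (t₀ - r) (t₀ + r), e x ≤ 0))
    (K : ℝ) (hK : ∀ x ∈ Icc (c - ρ) (c + ρ), |g x| ≤ K) :
    |d c| ≤ 2 * K / ρ := by
  rcases hsign with hs | hs
  · exact gromov_key_pos t₀ r c ρ hρ hsub g d e hgd hdc hde hs K hK
  · have := gromov_key_pos t₀ r c ρ hρ hsub (fun x => -g x) (fun x => -d x) (fun x => -e x)
      (fun x hx => (hgd x hx).neg) hdc.neg (fun x hx => (hde x hx).neg)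
      (fun x hx => by simpa using hs x hx) K (fun x hx => by simpa using hK x hx)
    simpa using this

/-- Gromov's inequality: if `f` is `C^{m+1}` on `I = [t₀ - r, t₀ + r]` and each derivative
`f^{(j)}`, `2 ≤ j ≤ m+1`, has constant sign on `I`, then
`|f^{(m)} t₀| ≤ 2^{(m+2)(m+1)/2 - 2} * (sup_I |f|) / r^m`. -/
theorem gromov_inequality (m : ℕ) (hm : 1 ≤ m)
    (t₀ r : ℝ) (hr : 0 < r) (I : Set ℝ) (hI : I = Set.Icc (t₀ - r) (t₀ + r))
    (f : ℝ → ℝ) (hf : ContDiffOn ℝ (m + 1) f I)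
    (hsign : ∀ j : ℕ, 2 ≤ j → j ≤ m + 1 →
      (∀ x ∈ I, 0 ≤ iteratedDerivWithin j f I x) ∨
      (∀ x ∈ I, iteratedDerivWithin j f I x ≤ 0))
    (M : ℝ) (hM : ∀ t ∈ I, |f t| ≤ M) :
    |iteratedDerivWithin m f I t₀| ≤ 2 ^ ((m + 2) * (m + 1) / 2 - 2) * M / r ^ m := by
  subst hI
  set I : Set ℝ := Icc (t₀ - r) (t₀ + r) with hIdef
  have hrr : t₀ - r < t₀ + r := by linarith
  have hU : UniqueDiffOn ℝ I := uniqueDiffOn_Icc hrr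
  have hD : ∀ n : ℕ, n ≤ m → ∀ x ∈ I,
      HasDerivWithinAt (iteratedDerivWithin n f I) (iteratedDerivWithin (n + 1) f I x) I x := by
    intro n hn x hx
    have hdiff : DifferentiableOn ℝ (iteratedDerivWithin n f I) I :=
      hf.differentiableOn_iteratedDerivWithin (by exact_mod_cast Nat.lt_succ_of_le hn) hU
    have := (hdiff x hx).hasDerivWithinAt
    rwa [← iteratedDerivWithin_succ] at this
  have hC : ∀ n : ℕ, n ≤ m + 1 → ContinuousOn (iteratedDerivWithin n f I) I := by
    intro n hn
    exact hf.continuousOn_iteratedDerivWithin (by exact_mod_cast hn) hU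
  have main : ∀ n : ℕ, 1 ≤ n → n ≤ m → ∀ c ρ : ℝ, 0 < ρ → Icc (c - ρ) (c + ρ) ⊆ I →
      |iteratedDerivWithin n f I c| ≤ 2 ^ ((n + 2) * (n + 1) / 2 - 2) * M / ρ ^ n := by
    intro n h1
    induction n, h1 using Nat.le_induction with
    | base =>
      intro _ c ρ hρ hsub
      have key := gromov_key t₀ r c ρ hρ hsub f (iteratedDerivWithin 1 f I)
        (iteratedDerivWithin 2 f I)
        (fun x hx => by simpa only [iteratedDerivWithin_zero] using hD 0 (by omega) x hx)
        (hC 1 (by omega)) (hD 1 (by omega)) (hsign 2 (by omega) (by omega)) M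
        (fun x hx => hM x (hsub hx))
      calc |iteratedDerivWithin 1 f I c| ≤ 2 * M / ρ := key
        _ = 2 ^ ((1 + 2) * (1 + 1) / 2 - 2) * M / ρ ^ 1 := by norm_num
    | succ n hn IH =>
      intro hnm c ρ hρ hsub
      have hρ2 : (0:ℝ) < ρ / 2 := by linarith
      set K : ℝ := 2 ^ ((n + 2) * (n + 1) / 2 - 2) * M / (ρ / 2) ^ n with hKdef
      have hsub2 : Icc (c - ρ / 2) (c + ρ / 2) ⊆ I :=
        (Icc_subset_Icc (by linarith) (by linarith)).trans hsub
      have hK : ∀ x ∈ Icc (c - ρ / 2) (c + ρ / 2), |iteratedDerivWithin n f I x| ≤ K := by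
        intro x hx
        exact IH (by omega) x (ρ / 2) hρ2
          ((Icc_subset_Icc (by linarith [hx.1]) (by linarith [hx.2])).trans hsub)
      have key := gromov_key t₀ r c (ρ / 2) hρ2 hsub2 (iteratedDerivWithin n f I)
        (iteratedDerivWithin (n + 1) f I) (iteratedDerivWithin (n + 2) f I)
        (hD n (by omega)) (hC (n + 1) (by omega))
        (fun x hx => by simpa [show n + 1 + 1 = n + 2 by ring] using hD (n + 1) (by omega) x hx)
        (hsign (n + 2) (by omega) (by omega)) K hK
      have hexp : (n + 1 + 2) * (n + 1 + 1) / 2 - 2 = ((n + 2) * (n + 1) / 2 - 2) + (n + 2) := by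
        have h6 : 6 ≤ (n + 2) * (n + 1) := by nlinarith
        have hb : (n + 3) * (n + 2) = (n + 2) * (n + 1) + 2 * (n + 2) := by ring
        have hb' : (n + 1 + 2) * (n + 1 + 1) = (n + 3) * (n + 2) := by ring
        omega
      have heq : 2 * K / (ρ / 2) = 2 ^ ((n + 1 + 2) * (n + 1 + 1) / 2 - 2) * M / ρ ^ (n + 1) := by
        rw [hKdef, hexp, pow_add, div_pow]
        have hρne : ρ ≠ 0 := ne_of_gt hρ
        field_simp
        ring
      calc |iteratedDerivWithin (n + 1) f I c| ≤ 2 * K / (ρ / 2) := key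
        _ = _ := heq
  exact main m hm le_rfl t₀ r hr (by rw [hIdef])
end

section
/- Let m ≥ 1, r > 0, t₀ ∈ ℝ, I = [t₀ - r, t₀ + r], and let f : I → ℝ be of class C^{m+1} such that for each j = 2, …, m+1 either f^{(j)} ≥ 0 on I or f^{(j)} ≤ 0 on I. Suppose ω is a modulus of continuity with |f(x) - f(y)| ≤ ω(|x - y|) for all x, y ∈ I. Then |f^{(m)}(t₀)| ≤ 2^{(m+1)m/2 + m - 2} · ω(r) / r^m. -/
open Set

private lemma iter_subset {f : ℝ → ℝ} {I J : Set ℝ} (hJI : J ⊆ I)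
    (hIu : UniqueDiffOn ℝ I) (hJu : UniqueDiffOn ℝ J) {N : ℕ}
    (hf : ContDiffOn ℝ (N : WithTop ℕ∞) f I) :
    ∀ n : ℕ, n ≤ N → ∀ x ∈ J, iteratedDerivWithin n f J x = iteratedDerivWithin n f I x := by
  intro n
  induction n with
  | zero => intro _ x hx; simp [iteratedDerivWithin_zero]
  | succ n ih =>
    intro hn x hx
    rw [iteratedDerivWithin_succ, iteratedDerivWithin_succ]
    rw [derivWithin_congr (fun y hy => ih (by omega) y hy) (ih (by omega) x hx)]
    exact derivWithin_subset hJI (hJu x hx)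
      (hf.differentiableOn_iteratedDerivWithin (by exact_mod_cast hn) hIu x (hJI hx))

private lemma monoAnti {a b : ℝ} (hab : a < b) {g : ℝ → ℝ}
    (hg : DifferentiableOn ℝ g (Set.Icc a b))
    (h : (∀ x ∈ Set.Icc a b, 0 ≤ derivWithin g (Set.Icc a b) x) ∨
         (∀ x ∈ Set.Icc a b, derivWithin g (Set.Icc a b) x ≤ 0)) :
    MonotoneOn g (Set.Icc a b) ∨ AntitoneOn g (Set.Icc a b) := by
  have hderiv : ∀ x ∈ Set.Ioo a b, deriv g x = derivWithin g (Set.Icc a b) x := by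
    intro x hx
    exact ((hg x (Set.Ioo_subset_Icc_self hx)).hasDerivWithinAt.hasDerivAt
      (Icc_mem_nhds hx.1 hx.2)).deriv
  rcases h with h | h
  · left
    refine monotoneOn_of_deriv_nonneg (convex_Icc a b) hg.continuousOn
      (hg.mono interior_subset) ?_
    intro x hx
    rw [interior_Icc] at hx
    rw [hderiv x hx]
    exact h x (Set.Ioo_subset_Icc_self hx)
  · right
    refine antitoneOn_of_deriv_nonpos (convex_Icc a b) hg.continuousOn
      (hg.mono interior_subset) ?_
    intro x hx
    rw [interior_Icc] at hx
    rw [hderiv x hx]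
    exact h x (Set.Ioo_subset_Icc_self hx)

private lemma slope_abs {t₀ r : ℝ} (hr : 0 < r) {ω f : ℝ → ℝ}
    (hf : ContDiffOn ℝ 1 f (Set.Icc (t₀ - r) (t₀ + r)))
    (hmod : ∀ x ∈ Set.Icc (t₀ - r) (t₀ + r), ∀ y ∈ Set.Icc (t₀ - r) (t₀ + r), x ≠ y →
      |f x - f y| ≤ ω |x - y|)
    {a b : ℝ} (ha : a ∈ Set.Icc (t₀ - r) (t₀ + r)) (hb : b ∈ Set.Icc (t₀ - r) (t₀ + r))
    (hab : a < b) :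
    ∃ ξ ∈ Set.Ioo a b, ξ ∈ Set.Icc (t₀ - r) (t₀ + r) ∧
      |derivWithin f (Set.Icc (t₀ - r) (t₀ + r)) ξ| ≤ ω (b - a) / (b - a) := by
  obtain ⟨ξ, hξ, hξeq⟩ := exists_hasDerivAt_eq_slope f _ hab
    (hf.continuousOn.mono (Set.Icc_subset_Icc ha.1 hb.2))
    (fun x hx => by
      have hxI : x ∈ Set.Ioo (t₀ - r) (t₀ + r) :=
        ⟨lt_of_le_of_lt ha.1 hx.1, lt_of_lt_of_le hx.2 hb.2⟩
      exact ((hf.differentiableOn one_ne_zero x (Set.Ioo_subset_Icc_self hxI)).hasDerivWithinAt).hasDerivAt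
        (Icc_mem_nhds hxI.1 hxI.2))
  have hξI : ξ ∈ Set.Icc (t₀ - r) (t₀ + r) := ⟨le_trans ha.1 (le_of_lt hξ.1), le_trans (le_of_lt hξ.2) hb.2⟩
  refine ⟨ξ, hξ, hξI, ?_⟩
  rw [hξeq, abs_div, abs_of_pos (by linarith : (0:ℝ) < b - a)]
  have hnum : |f b - f a| ≤ ω (b - a) := by
    have := hmod b hb a ha (by intro h; exact absurd h (by linarith : b ≠ a))
    rwa [abs_of_pos (by linarith : (0:ℝ) < b - a)] at this
  gcongr <;> linarith

private lemma gromov_aux (m : ℕ) (hm : 1 ≤ m) :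
    ∀ (ω : ℝ → ℝ), (∀ t ∈ Set.Ioi (0 : ℝ), 0 < ω t) → MonotoneOn ω (Set.Ioi 0) →
    ∀ (t₀ r : ℝ), 0 < r → ∀ (f : ℝ → ℝ),
    ContDiffOn ℝ (m + 1) f (Set.Icc (t₀ - r) (t₀ + r)) →
    (∀ j : ℕ, 2 ≤ j → j ≤ m + 1 →
      (∀ x ∈ Set.Icc (t₀ - r) (t₀ + r), 0 ≤ iteratedDerivWithin j f (Set.Icc (t₀ - r) (t₀ + r)) x) ∨
      (∀ x ∈ Set.Icc (t₀ - r) (t₀ + r), iteratedDerivWithin j f (Set.Icc (t₀ - r) (t₀ + r)) x ≤ 0)) →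
    (∀ x ∈ Set.Icc (t₀ - r) (t₀ + r), ∀ y ∈ Set.Icc (t₀ - r) (t₀ + r), x ≠ y →
      |f x - f y| ≤ ω |x - y|) →
    |iteratedDerivWithin m f (Set.Icc (t₀ - r) (t₀ + r)) t₀| ≤
      2 ^ ((m + 1) * m / 2 + m - 2) * ω r / r ^ m := by
  induction m, hm using Nat.le_induction with
  | base =>
    intro ω hpos hmono t₀ r hr f hf hsign hmod
    have hab : t₀ - r < t₀ + r := by linarith
    have hIu : UniqueDiffOn ℝ (Icc (t₀ - r) (t₀ + r)) := uniqueDiffOn_Icc hab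
    have ht₀ : t₀ ∈ Icc (t₀ - r) (t₀ + r) := ⟨by linarith, by linarith⟩
    have hL : t₀ - r ∈ Icc (t₀ - r) (t₀ + r) := ⟨le_refl _, by linarith⟩
    have hR : t₀ + r ∈ Icc (t₀ - r) (t₀ + r) := ⟨by linarith, le_refl _⟩
    have hf1 : ContDiffOn ℝ 1 f (Icc (t₀ - r) (t₀ + r)) := hf.of_le (by norm_cast)
    obtain ⟨ξ, hξo, hξI, hξb⟩ := slope_abs hr hf1 hmod hL ht₀ (by linarith)
    obtain ⟨η, hηo, hηI, hηb⟩ := slope_abs hr hf1 hmod ht₀ hR (by linarith)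
    rw [show t₀ - (t₀ - r) = r by ring] at hξb
    rw [show t₀ + r - t₀ = r by ring] at hηb
    -- monotonicity of g := derivWithin f I
    have hgdiff : DifferentiableOn ℝ (derivWithin f (Icc (t₀ - r) (t₀ + r)))
        (Icc (t₀ - r) (t₀ + r)) := by
      have := hf.derivWithin hIu (le_refl _)
      exact this.differentiableOn (by norm_cast)
    have hderiv2 : ∀ x ∈ Icc (t₀ - r) (t₀ + r), iteratedDerivWithin 2 f (Icc (t₀ - r) (t₀ + r)) x
        = derivWithin (derivWithin f (Icc (t₀ - r) (t₀ + r))) (Icc (t₀ - r) (t₀ + r)) x := by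
      intro x hx
      rw [show (2:ℕ) = 1 + 1 from rfl, iteratedDerivWithin_succ', iteratedDerivWithin_one]
    have hMA := monoAnti hab hgdiff (by
      rcases hsign 2 le_rfl (by omega) with h | h
      · exact Or.inl (fun x hx => (hderiv2 x hx) ▸ h x hx)
      · exact Or.inr (fun x hx => (hderiv2 x hx) ▸ h x hx))
    have hbound : |derivWithin f (Icc (t₀ - r) (t₀ + r)) t₀| ≤ ω r / r := by
      have h1 := abs_le.1 hξb
      have h2 := abs_le.1 hηb
      rcases hMA with hMA | hMA
      · have e1 := hMA hξI ht₀ (le_of_lt hξo.2)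
        have e2 := hMA ht₀ hηI (le_of_lt hηo.1)
        exact abs_le.2 ⟨by linarith, by linarith⟩
      · have e1 := hMA hξI ht₀ (le_of_lt hξo.2)
        have e2 := hMA ht₀ hηI (le_of_lt hηo.1)
        exact abs_le.2 ⟨by linarith, by linarith⟩
    rw [iteratedDerivWithin_one]
    calc |derivWithin f (Icc (t₀ - r) (t₀ + r)) t₀| ≤ ω r / r := hbound
      _ = 2 ^ ((1 + 1) * 1 / 2 + 1 - 2) * ω r / r ^ 1 := by norm_num
  | succ m hm ih =>
    intro ω hpos hmono t₀ r hr f hf hsign hmod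
    have hab : t₀ - r < t₀ + r := by linarith
    have hIu : UniqueDiffOn ℝ (Icc (t₀ - r) (t₀ + r)) := uniqueDiffOn_Icc hab
    have hr2 : (0:ℝ) < r / 2 := by linarith
    have hrne : r ≠ 0 := ne_of_gt hr
    have hab2 : t₀ - r / 2 < t₀ + r / 2 := by linarith
    have hJu : UniqueDiffOn ℝ (Icc (t₀ - r / 2) (t₀ + r / 2)) := uniqueDiffOn_Icc hab2
    have hJI : Icc (t₀ - r / 2) (t₀ + r / 2) ⊆ Icc (t₀ - r) (t₀ + r) :=
      Icc_subset_Icc (by linarith) (by linarith)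
    have ht₀ : t₀ ∈ Icc (t₀ - r) (t₀ + r) := ⟨by linarith, by linarith⟩
    have ht₀J : t₀ ∈ Icc (t₀ - r / 2) (t₀ + r / 2) := ⟨by linarith, by linarith⟩
    set g := derivWithin f (Icc (t₀ - r) (t₀ + r)) with hgdef
    have hgC : ContDiffOn ℝ (↑(m + 1) : WithTop ℕ∞) g (Icc (t₀ - r) (t₀ + r)) :=
      hf.derivWithin hIu le_rfl
    have hg1 : ContDiffOn ℝ 1 g (Icc (t₀ - r) (t₀ + r)) := hgC.of_le (by norm_cast; omega)
    have hgdiff : DifferentiableOn ℝ g (Icc (t₀ - r) (t₀ + r)) := hg1.differentiableOn one_ne_zero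
    have hf1 : ContDiffOn ℝ 1 f (Icc (t₀ - r) (t₀ + r)) := hf.of_le (by norm_cast; omega)
    -- monotone or antitone
    have hderiv2 : ∀ x ∈ Icc (t₀ - r) (t₀ + r),
        iteratedDerivWithin 2 f (Icc (t₀ - r) (t₀ + r)) x
          = derivWithin g (Icc (t₀ - r) (t₀ + r)) x := by
      intro x hx
      rw [show (2:ℕ) = 1 + 1 from rfl, iteratedDerivWithin_succ',
        iteratedDerivWithin_one]
    have hMA := monoAnti hab hgdiff (by
      rcases hsign 2 le_rfl (by omega) with h | h
      · exact Or.inl (fun x hx => (hderiv2 x hx) ▸ h x hx)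
      · exact Or.inr (fun x hx => (hderiv2 x hx) ▸ h x hx))
    -- Lipschitz constant for g
    have hgC' : ContDiffOn ℝ (↑m : WithTop ℕ∞) (derivWithin g (Icc (t₀ - r) (t₀ + r)))
        (Icc (t₀ - r) (t₀ + r)) := hgC.derivWithin hIu (by norm_cast)
    obtain ⟨C, hC⟩ := (isCompact_Icc (a := t₀ - r) (b := t₀ + r)).exists_bound_of_continuousOn
      (hgC'.continuousOn)
    set K := max C 0 with hKdef
    have hK0 : (0:ℝ) ≤ K := le_max_right _ _
    have hlip : ∀ x ∈ Icc (t₀ - r) (t₀ + r), ∀ y ∈ Icc (t₀ - r) (t₀ + r),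
        |g x - g y| ≤ K * |x - y| := by
      intro x hx y hy
      have := (convex_Icc (t₀ - r) (t₀ + r)).norm_image_sub_le_of_norm_derivWithin_le (C := K) hgdiff
        (fun z hz => (hC z hz).trans (le_max_left C 0)) hy hx
      simpa [Real.norm_eq_abs] using this
    set M := 4 * ω (r / 2) / r with hMdef
    have hωr2 : 0 < ω (r / 2) := hpos _ hr2
    have hM : 0 < M := by rw [hMdef]; exact div_pos (by linarith) hr
    have hhalf : ω (r / 2) / (r / 2) = M / 2 := by rw [hMdef]; field_simp; ring
    -- key bound on oscillation of g on J
    have hkey : ∀ x ∈ Icc (t₀ - r / 2) (t₀ + r / 2), ∀ y ∈ Icc (t₀ - r / 2) (t₀ + r / 2),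
        x < y → |g x - g y| ≤ M := by
      intro x hx y hy hxy
      obtain ⟨ξ, hξo, hξI, hξb⟩ := slope_abs hr hf1 hmod (a := x - r / 2) (b := x)
        ⟨by linarith [hx.1], by linarith [hx.2]⟩ (hJI hx) (by linarith)
      obtain ⟨η, hηo, hηI, hηb⟩ := slope_abs hr hf1 hmod (a := y) (b := y + r / 2)
        (hJI hy) ⟨by linarith [hy.1], by linarith [hy.2]⟩ (by linarith)
      rw [show x - (x - r / 2) = r / 2 by ring, hhalf] at hξb
      rw [show y + r / 2 - y = r / 2 by ring, hhalf] at hηb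
      have h1 := abs_le.1 hξb
      have h2 := abs_le.1 hηb
      rcases hMA with hMA | hMA
      · have e1 := hMA hξI (hJI hx) hξo.2.le
        have e2 := hMA (hJI hx) (hJI hy) hxy.le
        have e3 := hMA (hJI hy) hηI hηo.1.le
        exact abs_le.2 ⟨by linarith, by linarith⟩
      · have e1 := hMA hξI (hJI hx) hξo.2.le
        have e2 := hMA (hJI hx) (hJI hy) hxy.le
        have e3 := hMA (hJI hy) hηI hηo.1.le
        exact abs_le.2 ⟨by linarith, by linarith⟩
    -- the new modulus
    set ω₁ : ℝ → ℝ := fun t => min ((K + 1) * t) M with hω₁def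
    have hpos₁ : ∀ t ∈ Ioi (0:ℝ), 0 < ω₁ t :=
      fun t ht => lt_min (mul_pos (by linarith) ht) hM
    have hmono₁ : MonotoneOn ω₁ (Ioi 0) := fun a _ b _ hab' =>
      min_le_min (mul_le_mul_of_nonneg_left hab' (by linarith)) le_rfl
    have hmod₁ : ∀ x ∈ Icc (t₀ - r / 2) (t₀ + r / 2), ∀ y ∈ Icc (t₀ - r / 2) (t₀ + r / 2),
        x ≠ y → |g x - g y| ≤ ω₁ |x - y| := by
      intro x hx y hy hxy
      refine le_min ?_ ?_
      · calc |g x - g y| ≤ K * |x - y| := hlip x (hJI hx) y (hJI hy)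
          _ ≤ (K + 1) * |x - y| := by nlinarith [abs_nonneg (x - y)]
      · rcases lt_or_gt_of_ne hxy with h | h
        · exact hkey x hx y hy h
        · rw [abs_sub_comm]; exact hkey y hy x hx h
    -- transfer of iterated derivatives from (f, I) to (g, J)
    have hgCnat : ContDiffOn ℝ ((m + 1 : ℕ) : WithTop ℕ∞) g (Icc (t₀ - r) (t₀ + r)) := by
      exact_mod_cast hgC
    have htrans : ∀ j : ℕ, j ≤ m + 1 → ∀ x ∈ Icc (t₀ - r / 2) (t₀ + r / 2),
        iteratedDerivWithin j g (Icc (t₀ - r / 2) (t₀ + r / 2)) x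
          = iteratedDerivWithin (j + 1) f (Icc (t₀ - r) (t₀ + r)) x := by
      intro j hj x hx
      rw [iter_subset hJI hIu hJu hgCnat j hj x hx, iteratedDerivWithin_succ']
    have hsign₁ : ∀ j : ℕ, 2 ≤ j → j ≤ m + 1 →
        (∀ x ∈ Icc (t₀ - r / 2) (t₀ + r / 2),
          0 ≤ iteratedDerivWithin j g (Icc (t₀ - r / 2) (t₀ + r / 2)) x) ∨
        (∀ x ∈ Icc (t₀ - r / 2) (t₀ + r / 2),
          iteratedDerivWithin j g (Icc (t₀ - r / 2) (t₀ + r / 2)) x ≤ 0) := by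
      intro j h2 hj
      rcases hsign (j + 1) (by omega) (by omega) with h | h
      · exact Or.inl fun x hx => (htrans j hj x hx) ▸ h x (hJI hx)
      · exact Or.inr fun x hx => (htrans j hj x hx) ▸ h x (hJI hx)
    have hgJ : ContDiffOn ℝ (↑m + 1) g (Icc (t₀ - r / 2) (t₀ + r / 2)) :=
      (hgCnat.mono hJI).of_le (by norm_cast)
    have hIH := ih ω₁ hpos₁ hmono₁ t₀ (r / 2) hr2 g hgJ hsign₁ hmod₁
    -- rewrite the goal
    have hgoal_eq : iteratedDerivWithin (m + 1) f (Icc (t₀ - r) (t₀ + r)) t₀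
        = iteratedDerivWithin m g (Icc (t₀ - r / 2) (t₀ + r / 2)) t₀ :=
      (htrans m (by omega) t₀ ht₀J).symm
    rw [hgoal_eq]
    -- numeric bookkeeping
    have hω₁r2 : ω₁ (r / 2) ≤ 4 * ω r / r := by
      refine (min_le_right _ _).trans ?_
      rw [hMdef]
      have hωle : ω (r / 2) ≤ ω r := hmono (mem_Ioi.2 hr2) (mem_Ioi.2 hr) (by linarith)
      exact (div_le_div_iff_of_pos_right hr).2 (by linarith)
    obtain ⟨q, hq⟩ := Nat.even_mul_succ_self m
    have hq2 : (m + 1) * m = 2 * q := by rw [mul_comm, hq]; ring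
    have h2q : 2 ≤ 2 * q := by rw [← hq2]; nlinarith
    have hE1 : (m + 1) * m / 2 = q := by rw [hq2]; omega
    have hE2 : (m + 1 + 1) * (m + 1) = 2 * q + 2 * (m + 1) := by
      have h : (m + 1 + 1) * (m + 1) = (m + 1) * m + 2 * (m + 1) := by ring
      rw [h, hq2]
    have hE3 : (m + 1 + 1) * (m + 1) / 2 + (m + 1) - 2
        = ((m + 1) * m / 2 + m - 2) + (m + 2) := by
      rw [hE2, hE1]; omega
    have hpow : (0:ℝ) < (r / 2) ^ m := pow_pos hr2 m
    calc |iteratedDerivWithin m g (Icc (t₀ - r / 2) (t₀ + r / 2)) t₀|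
        ≤ 2 ^ ((m + 1) * m / 2 + m - 2) * ω₁ (r / 2) / (r / 2) ^ m := hIH
      _ ≤ 2 ^ ((m + 1) * m / 2 + m - 2) * (4 * ω r / r) / (r / 2) ^ m := by
          refine (div_le_div_iff_of_pos_right hpow).2 ?_
          exact mul_le_mul_of_nonneg_left hω₁r2 (by positivity)
      _ = 2 ^ ((m + 1) * m / 2 + m - 2 + (m + 2)) * ω r / r ^ (m + 1) := by
          rw [pow_add, div_pow]
          field_simp
          ring
      _ = 2 ^ ((m + 1 + 1) * (m + 1) / 2 + (m + 1) - 2) * ω r / r ^ (m + 1) := by rw [hE3]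

/-- Gromov's inequality with a modulus of continuity: if `f` is `C^{m+1}` on
`I = [t₀ - r, t₀ + r]`, each `f^{(j)}`, `2 ≤ j ≤ m+1`, has constant sign on `I`, and
`|f x - f y| ≤ ω |x - y|` on `I`, then `|f^{(m)} t₀| ≤ 2^{(m+1)m/2 + m - 2} * ω r / r^m`. -/
theorem gromov_inequality_modulus (ω : ℝ → ℝ)
    (hpos : ∀ t ∈ Set.Ioi (0 : ℝ), 0 < ω t)
    (hcont : ContinuousOn ω (Set.Ioi 0))
    (hmono : MonotoneOn ω (Set.Ioi 0))
    (hconc : ConcaveOn ℝ (Set.Ioi 0) ω)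
    (hlim : Filter.Tendsto ω (nhdsWithin 0 (Set.Ioi 0)) (nhds 0))
    (m : ℕ) (hm : 1 ≤ m)
    (t₀ r : ℝ) (hr : 0 < r) (I : Set ℝ) (hI : I = Set.Icc (t₀ - r) (t₀ + r))
    (f : ℝ → ℝ) (hf : ContDiffOn ℝ (m + 1) f I)
    (hsign : ∀ j : ℕ, 2 ≤ j → j ≤ m + 1 →
      (∀ x ∈ I, 0 ≤ iteratedDerivWithin j f I x) ∨
      (∀ x ∈ I, iteratedDerivWithin j f I x ≤ 0))
    (hmod : ∀ x ∈ I, ∀ y ∈ I, x ≠ y → |f x - f y| ≤ ω |x - y|) :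
    |iteratedDerivWithin m f I t₀| ≤ 2 ^ ((m + 1) * m / 2 + m - 2) * ω r / r ^ m := by
  subst hI
  exact gromov_aux m hm ω hpos hmono t₀ r hr f hf hsign hmod
end
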